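/- For every s ≥ 0, wᵀ e^{As} e_1 ≤ 1 − e^{−(N−1)λ_c s}. -/

import Mathlib

open Matrix

section InfectionAux

/-- The functional `M ↦ u ⬝ᵥ (M *ᵥ v)` as a linear map. -/
noncomputable def infDmv {N : ℕ} (u v : Fin N → ℝ) :
    Matrix (Fin N) (Fin N) ℝ →ₗ[ℝ] ℝ where
  toFun M := u ⬝ᵥ (M *ᵥ v)
  map_add' M₁ M₂ := by simp [Matrix.add_mulVec]
  map_smul' c M := by simp [Matrix.smul_mulVec]

lemma infDmv_apply {N : ℕ} (u v : Fin N → ℝ) (M : Matrix (Fin N) (Fin N) ℝ) :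
    infDmv u v M = u ⬝ᵥ (M *ᵥ v) := rfl

lemma inf_hasDerivAt {N : ℕ} (A : Matrix (Fin N) (Fin N) ℝ) (u v : Fin N → ℝ) (s : ℝ) :
    HasDerivAt (fun t : ℝ => u ⬝ᵥ (NormedSpace.exp (t • A) *ᵥ v))
      (u ⬝ᵥ (A *ᵥ (NormedSpace.exp (s • A) *ᵥ v))) s := by
  letI : SeminormedRing (Matrix (Fin N) (Fin N) ℝ) := Matrix.linftyOpSemiNormedRing
  letI : NormedRing (Matrix (Fin N) (Fin N) ℝ) := Matrix.linftyOpNormedRing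
  letI : NormedAlgebra ℝ (Matrix (Fin N) (Fin N) ℝ) := Matrix.linftyOpNormedAlgebra
  have h := hasDerivAt_exp_smul_const' (𝕂 := ℝ) A s
  have hL := ((infDmv u v).toContinuousLinearMap.hasFDerivAt
      (x := NormedSpace.exp (s • A))).comp_hasDerivAt s h
  simp only [Function.comp_def] at hL
  have hL' : HasDerivAt (fun t : ℝ => u ⬝ᵥ (NormedSpace.exp (t • A) *ᵥ v))
      (u ⬝ᵥ ((A * NormedSpace.exp (s • A)) *ᵥ v)) s := hL
  rwa [← Matrix.mulVec_mulVec] at hL'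

lemma inf_dot_exp_nonneg {N : ℕ} (M : Matrix (Fin N) (Fin N) ℝ) (hM : ∀ i j, 0 ≤ M i j)
    (u v : Fin N → ℝ) (hu : ∀ i, 0 ≤ u i) (hv : ∀ i, 0 ≤ v i) :
    0 ≤ u ⬝ᵥ (NormedSpace.exp M *ᵥ v) := by
  letI : SeminormedRing (Matrix (Fin N) (Fin N) ℝ) := Matrix.linftyOpSemiNormedRing
  letI : NormedRing (Matrix (Fin N) (Fin N) ℝ) := Matrix.linftyOpNormedRing
  letI : NormedAlgebra ℝ (Matrix (Fin N) (Fin N) ℝ) := Matrix.linftyOpNormedAlgebra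
  have hpow : ∀ (n : ℕ) (i j : Fin N), (0 : ℝ) ≤ (M ^ n) i j := by
    intro n
    induction n with
    | zero =>
      intro i j
      simp only [pow_zero]
      rw [Matrix.one_apply]
      split <;> norm_num
    | succ n ih =>
      intro i j
      rw [pow_succ, Matrix.mul_apply]
      exact Finset.sum_nonneg fun k _ => mul_nonneg (ih i k) (hM k j)
  have hsum : Summable fun n : ℕ => ((Nat.factorial n : ℝ))⁻¹ • M ^ n :=
    NormedSpace.expSeries_summable' (𝕂 := ℝ) M
  have hmap := ((infDmv u v).toContinuousLinearMap).map_tsum hsum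
  have hexp : NormedSpace.exp M = ∑' n : ℕ, ((Nat.factorial n : ℝ))⁻¹ • M ^ n := by
    rw [NormedSpace.exp_eq_tsum ℝ]
  have hrw : u ⬝ᵥ ((∑' n : ℕ, ((Nat.factorial n : ℝ))⁻¹ • M ^ n) *ᵥ v)
      = ∑' n : ℕ, ((Nat.factorial n : ℝ))⁻¹ * (u ⬝ᵥ ((M ^ n) *ᵥ v)) := by
    simpa [infDmv_apply, Matrix.smul_mulVec, smul_eq_mul] using hmap
  rw [hexp, hrw]
  refine tsum_nonneg fun n => ?_
  have h1 : 0 ≤ u ⬝ᵥ ((M ^ n) *ᵥ v) := by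
    simp only [dotProduct, Matrix.mulVec]
    refine Finset.sum_nonneg fun i _ => mul_nonneg (hu i) ?_
    exact Finset.sum_nonneg fun j _ => mul_nonneg (hpow n i j) (hv j)
  have h2 : (0 : ℝ) ≤ ((Nat.factorial n : ℝ))⁻¹ := by positivity
  exact mul_nonneg h2 h1

lemma inf_exp_scalar {N : ℕ} (r : ℝ) :
    NormedSpace.exp (r • (1 : Matrix (Fin N) (Fin N) ℝ))
      = Matrix.diagonal (fun _ => Real.exp r) := by
  have h1 : r • (1 : Matrix (Fin N) (Fin N) ℝ) = Matrix.diagonal (fun _ => r) := by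
    ext i j
    simp [Matrix.one_apply, Matrix.diagonal_apply, mul_ite]
  rw [h1, Matrix.exp_diagonal]
  congr 1
  funext i
  rw [Pi.exp_def]
  simp [← Real.exp_eq_exp_ℝ]

end InfectionAux

/-- Pointwise domination of the Infection-model cdf by the Ping-model cdf:
for all `s ≥ 0`, `wᵀ e^{As} e₁ ≤ 1 - e^{-(N-1)λ_c s}`. -/
theorem infection_cdf_le_ping_cdf (N : ℕ) (hN : 2 ≤ N) (lc : ℝ) (hlc : 0 < lc)
    (A : Matrix (Fin N) (Fin N) ℝ)
    (hA : ∀ i j : Fin N, A i j =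
      if (i : ℕ) = (j : ℕ) then
        -((((i : ℕ) : ℝ) + 1) * ((N : ℝ) - (((i : ℕ) : ℝ) + 1)) * lc)
      else if (i : ℕ) = (j : ℕ) + 1 then
        (((j : ℕ) : ℝ) + 1) * ((N : ℝ) - (((j : ℕ) : ℝ) + 1)) * lc
      else 0)
    (w : Fin N → ℝ) (hw : ∀ k : Fin N, w k = ((k : ℕ) : ℝ) / ((N : ℝ) - 1))
    (e1 : Fin N → ℝ) (he1 : ∀ j : Fin N, e1 j = if (j : ℕ) = 0 then 1 else 0) :
    ∀ s : ℝ, 0 ≤ s →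
      w ⬝ᵥ (NormedSpace.exp (s • A) *ᵥ e1)
        ≤ 1 - Real.exp (-(((N : ℝ) - 1) * lc) * s) := by
  classical
  haveI : NeZero N := ⟨by omega⟩
  have hN2 : (2 : ℝ) ≤ (N : ℝ) := by exact_mod_cast hN
  have hNpos : (0 : ℝ) < (N : ℝ) - 1 := by linarith
  set μ : ℝ := ((N : ℝ) - 1) * lc with hμdef
  have hμpos : 0 < μ := mul_pos hNpos hlc
  -- column structure of A
  have hcol : ∀ (u : Fin N → ℝ) (j : Fin N), (u ᵥ* A) j =
      if h : (j : ℕ) + 1 < N then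
        (u ⟨(j : ℕ) + 1, h⟩ - u j) *
          ((((j : ℕ) : ℝ) + 1) * ((N : ℝ) - (((j : ℕ) : ℝ) + 1)) * lc)
      else 0 := by
    intro u j
    have hvm : (u ᵥ* A) j = ∑ i, u i * A i j := by
      simp [Matrix.vecMul, dotProduct]
    by_cases h : (j : ℕ) + 1 < N
    · rw [hvm, dif_pos h]
      set r : ℝ := (((j : ℕ) : ℝ) + 1) * ((N : ℝ) - (((j : ℕ) : ℝ) + 1)) * lc with hr
      set j' : Fin N := ⟨(j : ℕ) + 1, h⟩ with hj'
      have hjj' : j ≠ j' := by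
        intro hc
        have h2 : (j : ℕ) = (j' : ℕ) := congrArg Fin.val hc
        have h3 : (j' : ℕ) = (j : ℕ) + 1 := rfl
        omega
      have hsplit : ∀ i : Fin N, u i * A i j =
          (if i = j then -(u j * r) else 0) + (if i = j' then u j' * r else 0) := by
        intro i
        rcases eq_or_ne i j with rfl | hij
        · rw [if_pos rfl, if_neg hjj', hA, if_pos rfl]
          ring
        · rcases eq_or_ne i j' with rfl | hij'
          · rw [if_neg hij, if_pos rfl, hA]
            have h1 : ((j' : ℕ) : ℕ) ≠ (j : ℕ) := by simp [hj']
            have h2 : ((j' : ℕ) : ℕ) = (j : ℕ) + 1 := by simp [hj']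
            rw [if_neg h1, if_pos h2]
            ring
          · rw [if_neg hij, if_neg hij', hA]
            have h1 : (i : ℕ) ≠ (j : ℕ) := fun hc => hij (Fin.ext hc)
            have h2 : (i : ℕ) ≠ (j : ℕ) + 1 := by
              intro hc
              exact hij' (Fin.ext (by simp [hj', hc]))
            rw [if_neg h1, if_neg h2]
            ring
      rw [Finset.sum_congr rfl fun i _ => hsplit i, Finset.sum_add_distrib,
        Finset.sum_ite_eq' Finset.univ j fun _ => -(u j * r),
        Finset.sum_ite_eq' Finset.univ j' fun _ => u j' * r]
      simp only [Finset.mem_univ, if_true]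
      ring
    · rw [hvm, dif_neg h]
      have hjN : (j : ℕ) + 1 = N := by
        have := j.isLt
        omega
      refine Finset.sum_eq_zero fun i _ => ?_
      rw [hA]
      split_ifs with h1 h2
      · have hNc : ((N : ℝ)) = ((i : ℕ) : ℝ) + 1 := by
          rw [h1]
          exact_mod_cast hjN.symm
        rw [hNc]
        ring_nf
      · exfalso
        have := i.isLt
        omega
      · ring
  -- p s and its properties
  set p : ℝ → Fin N → ℝ := fun s => NormedSpace.exp (s • A) *ᵥ e1 with hp
  have he1nn : ∀ i, 0 ≤ e1 i := by
    intro i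
    rw [he1]
    split <;> norm_num
  -- nonnegativity of p via Metzler shift
  have hpnonneg : ∀ s : ℝ, 0 ≤ s → ∀ j : Fin N, 0 ≤ p s j := by
    intro s hs j
    set c : ℝ := (N : ℝ) * (N : ℝ) * lc with hc
    set M' : Matrix (Fin N) (Fin N) ℝ := A + c • (1 : Matrix (Fin N) (Fin N) ℝ) with hM'
    have hM'nn : ∀ i k, 0 ≤ M' i k := by
      intro i k
      have hone : (1 : Matrix (Fin N) (Fin N) ℝ) i k = if i = k then 1 else 0 :=
        Matrix.one_apply
      have : M' i k = A i k + c * (if i = k then 1 else 0) := by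
        simp [hM', hone]
      rw [this, hA]
      have hiN : ((i : ℕ) : ℝ) + 1 ≤ (N : ℝ) := by
        have := i.isLt
        exact_mod_cast Nat.succ_le_of_lt this
      have hiN0 : 0 ≤ (N : ℝ) - (((i : ℕ) : ℝ) + 1) := by linarith
      by_cases h1 : (i : ℕ) = (k : ℕ)
      · have hik : i = k := Fin.ext h1
        rw [if_pos h1, if_pos hik, mul_one]
        have hb : (((i : ℕ) : ℝ) + 1) * ((N : ℝ) - (((i : ℕ) : ℝ) + 1)) ≤ (N : ℝ) * (N : ℝ) := by
          nlinarith
        rw [hc]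
        nlinarith
      · have hik : i ≠ k := fun hc' => h1 (by rw [hc'])
        rw [if_neg h1, if_neg hik, mul_zero, add_zero]
        by_cases h2 : (i : ℕ) = (k : ℕ) + 1
        · rw [if_pos h2]
          have hkN : ((k : ℕ) : ℝ) + 1 ≤ (N : ℝ) := by
            have := k.isLt
            exact_mod_cast Nat.succ_le_of_lt this
          have hk0 : 0 ≤ (N : ℝ) - (((k : ℕ) : ℝ) + 1) := by linarith
          have hk1 : (0:ℝ) ≤ ((k : ℕ) : ℝ) + 1 := by positivity
          exact mul_nonneg (mul_nonneg hk1 hk0) hlc.le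
        · rw [if_neg h2]
    have hsM'nn : ∀ i k, 0 ≤ (s • M') i k := by
      intro i k
      have : (s • M') i k = s * M' i k := rfl
      rw [this]
      exact mul_nonneg hs (hM'nn i k)
    -- exp (s•A) = exp (s•M') * exp ((-(s*c))•1)
    have hdecomp : s • A = s • M' + (-(s * c)) • (1 : Matrix (Fin N) (Fin N) ℝ) := by
      rw [hM']
      module
    have hcomm : Commute (s • M') ((-(s * c)) • (1 : Matrix (Fin N) (Fin N) ℝ)) :=
      (Commute.one_right (s • M')).smul_right _
    have hexpprod : NormedSpace.exp (s • A)
        = NormedSpace.exp (s • M') * NormedSpace.exp ((-(s * c)) • (1 : Matrix (Fin N) (Fin N) ℝ)) := by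
      rw [hdecomp]
      exact Matrix.exp_add_of_commute _ _ hcomm
    have hdiag : (Matrix.diagonal fun _ : Fin N => Real.exp (-(s * c))) *ᵥ e1
        = Real.exp (-(s * c)) • e1 := by
      funext i
      rw [Matrix.mulVec_diagonal]
      rfl
    have hpform : p s = NormedSpace.exp (s • M') *ᵥ (Real.exp (-(s * c)) • e1) := by
      rw [hp]
      simp only
      rw [hexpprod, ← Matrix.mulVec_mulVec, inf_exp_scalar, hdiag]
    have hvnn : ∀ i, 0 ≤ (Real.exp (-(s * c)) • e1) i := by
      intro i
      have : (Real.exp (-(s * c)) • e1) i = Real.exp (-(s * c)) * e1 i := rfl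
      rw [this]
      exact mul_nonneg (Real.exp_pos _).le (he1nn i)
    have hsingle : ∀ i, 0 ≤ (Pi.single j 1 : Fin N → ℝ) i := by
      intro i
      rcases eq_or_ne i j with rfl | hij
      · simp
      · simp [Pi.single_apply, hij]
    have := inf_dot_exp_nonneg (s • M') hsM'nn (Pi.single j 1)
      (Real.exp (-(s * c)) • e1) hsingle hvnn
    rwa [← hpform, single_dotProduct, one_mul] at this
  -- total mass
  have hones0 : ((fun _ => (1 : ℝ)) ᵥ* A) = 0 := by
    funext j
    rw [hcol]
    split
    · simp
    · rfl
  have hmass : ∀ s : ℝ, (fun _ => (1 : ℝ)) ⬝ᵥ p s = 1 := by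
    have hder : ∀ s : ℝ, HasDerivAt (fun t => (fun _ => (1 : ℝ)) ⬝ᵥ p t) 0 s := by
      intro s
      have h := inf_hasDerivAt A (fun _ => (1 : ℝ)) e1 s
      have hval : (fun _ => (1 : ℝ)) ⬝ᵥ (A *ᵥ (NormedSpace.exp (s • A) *ᵥ e1)) = 0 := by
        rw [Matrix.dotProduct_mulVec, hones0, zero_dotProduct]
      rw [hval] at h
      exact h
    have hdiff : Differentiable ℝ fun t => (fun _ => (1 : ℝ)) ⬝ᵥ p t :=
      fun t => (hder t).differentiableAt
    have hconst := is_const_of_deriv_eq_zero hdiff (fun t => (hder t).deriv)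
    intro s
    have h0 : (fun _ => (1 : ℝ)) ⬝ᵥ p 0 = 1 := by
      rw [hp]
      simp only [zero_smul, NormedSpace.exp_zero, Matrix.one_mulVec]
      have : (fun _ => (1 : ℝ)) ⬝ᵥ e1 = ∑ j : Fin N, e1 j := by
        simp [dotProduct]
      rw [this]
      have he1single : e1 = Pi.single (0 : Fin N) 1 := by
        funext j
        rw [he1]
        rcases eq_or_ne j 0 with rfl | hj
        · simp
        · have : (j : ℕ) ≠ 0 := by
            intro hc
            exact hj (Fin.ext (by simpa using hc))
          simp [this, Pi.single_apply, hj]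
      rw [he1single, Finset.sum_eq_single (0 : Fin N)]
      · simp
      · intro b _ hb
        simp [Pi.single_apply, hb]
      · intro hb
        exact absurd (Finset.mem_univ _) hb
    calc (fun _ => (1 : ℝ)) ⬝ᵥ p s = (fun _ => (1 : ℝ)) ⬝ᵥ p 0 := hconst s 0
    _ = 1 := h0
  -- column bound: (w ᵥ* A) j ≤ μ * (1 - w j)
  have hcolbound : ∀ j : Fin N, (w ᵥ* A) j ≤ μ * (1 - w j) := by
    intro j
    rw [hcol]
    by_cases h : (j : ℕ) + 1 < N
    · rw [dif_pos h]
      set a : ℝ := ((j : ℕ) : ℝ) with ha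
      have hj' : w ⟨(j : ℕ) + 1, h⟩ = (a + 1) / ((N : ℝ) - 1) := by
        rw [hw]
        push_cast
        rfl
      have hjw : w j = a / ((N : ℝ) - 1) := hw j
      rw [hj', hjw, hμdef]
      have hdiff : (a + 1) / ((N : ℝ) - 1) - a / ((N : ℝ) - 1) = 1 / ((N : ℝ) - 1) := by
        field_simp
        ring
      rw [hdiff]
      have haN : a + 1 ≤ (N : ℝ) - 1 := by
        have : (j : ℕ) + 2 ≤ N := h
        have : ((j : ℕ) : ℝ) + 2 ≤ (N : ℝ) := by exact_mod_cast this
        linarith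
      have haN0 : 0 ≤ (N : ℝ) - (a + 1) := by linarith
      rw [div_mul_eq_mul_div, div_le_iff₀ hNpos]
      have hexp : ((N : ℝ) - 1) * lc * (1 - a / ((N : ℝ) - 1)) * ((N : ℝ) - 1)
          = ((N : ℝ) - 1) * (((N : ℝ) - 1) - a) * lc := by
        field_simp
      rw [hexp]
      have key : 1 * ((a + 1) * ((N : ℝ) - (a + 1)) * lc)
          ≤ ((N : ℝ) - 1) * (((N : ℝ) - 1) - a) * lc := by
        have h1 : ((N : ℝ) - 1) - a = (N : ℝ) - (a + 1) := by ring
        rw [h1, one_mul]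
        have := mul_le_mul_of_nonneg_right haN
          (mul_nonneg haN0 hlc.le)
        calc (a + 1) * ((N : ℝ) - (a + 1)) * lc
            = (a + 1) * (((N : ℝ) - (a + 1)) * lc) := by ring
        _ ≤ ((N : ℝ) - 1) * (((N : ℝ) - (a + 1)) * lc) := this
        _ = ((N : ℝ) - 1) * ((N : ℝ) - (a + 1)) * lc := by ring
      linarith
    · rw [dif_neg h]
      have hjN : (j : ℕ) + 1 = N := by
        have := j.isLt
        omega
      have hwj : w j = 1 := by
        rw [hw]
        have : ((j : ℕ) : ℝ) = (N : ℝ) - 1 := by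
          have : ((j : ℕ) : ℝ) + 1 = (N : ℝ) := by exact_mod_cast hjN
          linarith
        rw [this]
        field_simp
      rw [hwj]
      simp
  -- derivative bound
  set f : ℝ → ℝ := fun t => w ⬝ᵥ p t with hf
  set D : ℝ → ℝ := fun t => w ⬝ᵥ (A *ᵥ p t) with hD
  have hfder : ∀ t : ℝ, HasDerivAt f (D t) t := fun t => inf_hasDerivAt A w e1 t
  have hDbound : ∀ t : ℝ, 0 ≤ t → D t ≤ μ * (1 - f t) := by
    intro t ht
    have h1 : D t = (w ᵥ* A) ⬝ᵥ p t := by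
      rw [hD]
      simp only
      rw [Matrix.dotProduct_mulVec]
    rw [h1]
    have h2 : (w ᵥ* A) ⬝ᵥ p t ≤ ∑ j : Fin N, μ * (1 - w j) * p t j := by
      refine Finset.sum_le_sum fun j _ => ?_
      exact mul_le_mul_of_nonneg_right (hcolbound j) (hpnonneg t ht j)
    have h3 : ∑ j : Fin N, μ * (1 - w j) * p t j
        = μ * ((fun _ => (1 : ℝ)) ⬝ᵥ p t - w ⬝ᵥ p t) := by
      simp only [dotProduct, one_mul]
      rw [← Finset.sum_sub_distrib, Finset.mul_sum]
      congr 1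
      funext j
      ring
    rw [h3, hmass t] at h2
    exact h2
  -- Gronwall via the auxiliary function φ
  set φ : ℝ → ℝ := fun t => Real.exp (μ * t) * (f t - 1) with hφ
  have hφder : ∀ t : ℝ, HasDerivAt φ
      (Real.exp (μ * t) * μ * (f t - 1) + Real.exp (μ * t) * D t) t := by
    intro t
    have h1 : HasDerivAt (fun u : ℝ => Real.exp (μ * u)) (Real.exp (μ * t) * μ) t := by
      have := ((hasDerivAt_id t).const_mul μ).exp
      simpa using this
    have h2 : HasDerivAt (fun u : ℝ => f u - 1) (D t) t := (hfder t).sub_const 1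
    exact h1.mul h2
  have hφdiff : Differentiable ℝ φ := fun t => (hφder t).differentiableAt
  have hφanti : AntitoneOn φ (Set.Ici (0 : ℝ)) := by
    refine antitoneOn_of_deriv_nonpos (convex_Ici 0) hφdiff.continuous.continuousOn
      hφdiff.differentiableOn ?_
    intro x hx
    rw [interior_Ici] at hx
    have hx0 : (0 : ℝ) ≤ x := le_of_lt hx
    rw [(hφder x).deriv]
    have hb := hDbound x hx0
    have hepos : 0 < Real.exp (μ * x) := Real.exp_pos _
    nlinarith
  intro s hs
  have hφs : φ s ≤ φ 0 := hφanti (Set.self_mem_Ici) hs hs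
  have hf0 : f 0 = 0 := by
    rw [hf, hp]
    simp only [zero_smul, NormedSpace.exp_zero, Matrix.one_mulVec]
    have : w ⬝ᵥ e1 = ∑ j : Fin N, w j * e1 j := rfl
    rw [this]
    refine Finset.sum_eq_zero fun j _ => ?_
    rcases eq_or_ne j 0 with rfl | hj
    · rw [hw]
      simp
    · rw [he1]
      have : (j : ℕ) ≠ 0 := by
        intro hc
        exact hj (Fin.ext (by simpa using hc))
      simp [this]
  have hφ0 : φ 0 = -1 := by
    rw [hφ]
    simp [hf0]
  rw [hφ0] at hφs
  -- unfold φ s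
  have hφsval : Real.exp (μ * s) * (f s - 1) ≤ -1 := hφs
  have hkey : Real.exp (-(μ * s)) * Real.exp (μ * s) = 1 := by
    rw [← Real.exp_add]
    simp
  have hepos : 0 < Real.exp (μ * s) := Real.exp_pos _
  have hfinal : f s ≤ 1 - Real.exp (-(μ * s)) := by nlinarith
  have hgoal : -(((N : ℝ) - 1) * lc) * s = -(μ * s) := by
    rw [hμdef]
    ring
  rw [hgoal]
  exact hfinal
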